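/- arXiv:1509.02897 — 3 statements merged into one kernel-verified Lean document; each statement's English description precedes it below -/
import Mathlib

section
/- Let A ⊆ ℝ² be a closed set. For r > 0, let μ_A(r) = μ(A ∩ rS¹)/(2πr), where μ is one-dimensional Lebesgue (arc-length) measure on the circle rS¹ of radius r centered at the origin, and let Δ_A = inf{r > 0 : μ_A(r) > 0}. Let 𝒢 denote the standard Gaussian measure on ℝ². If r ↦ μ_A(r) is non-decreasing, then sup_{r > 0} ( μ_A(r) · e^{−r²/2} ) ≤ 𝒢(A) ≤ e^{−Δ_A²/2}. -/
open MeasureTheory ProbabilityTheory Real Set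

noncomputable section

/-- The standard Gaussian measure `𝒢` on `ℝ²` (product of two standard Gaussians). -/
def gauss2 : Measure (ℝ × ℝ) := (gaussianReal 0 1).prod (gaussianReal 0 1)

/-- `μ_A(r)`: the normalized arc-length measure of `A ∩ rS¹`, i.e. the fraction of the circle
of radius `r` centered at the origin lying in `A`. -/
def circFrac (A : Set (ℝ × ℝ)) (r : ℝ) : ℝ :=
  (volume {θ : ℝ | θ ∈ Set.Ico 0 (2 * π) ∧ (r * Real.cos θ, r * Real.sin θ) ∈ A}).toReal
    / (2 * π)

/-- `Δ_A = inf {r > 0 : μ_A(r) > 0}`, the essential distance from the origin to `A`. -/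
def essDist (A : Set (ℝ × ℝ)) : ℝ := sInf {r : ℝ | 0 < r ∧ 0 < circFrac A r}

theorem lintegral_comp_polarCoord_symm' (g : ℝ × ℝ → ENNReal) :
    ∫⁻ p, g p = ∫⁻ p in polarCoord.target, ENNReal.ofReal p.1 * g (polarCoord.symm p) := by
  set B : ℝ × ℝ → ℝ × ℝ →L[ℝ] ℝ × ℝ := fun p =>
    LinearMap.toContinuousLinearMap (Matrix.toLin (Module.Basis.finTwoProd ℝ) (Module.Basis.finTwoProd ℝ)
      !![cos p.2, -p.1 * sin p.2; sin p.2, p.1 * cos p.2])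
  have A : ∀ p ∈ polarCoord.target, HasFDerivWithinAt polarCoord.symm (B p) polarCoord.target p :=
    fun p _ => (hasFDerivAt_polarCoord_symm p).hasFDerivWithinAt
  have B_det : ∀ p, (B p).det = p.1 := by
    intro p
    conv_rhs => rw [← one_mul p.1, ← cos_sq_add_sin_sq p.2]
    simp only [B, neg_mul, LinearMap.det_toContinuousLinearMap, LinearMap.det_toLin,
      Matrix.det_fin_two_of, sub_neg_eq_add]
    ring
  calc
    ∫⁻ p, g p = ∫⁻ p in polarCoord.source, g p := by
      rw [← setLIntegral_univ]
      exact setLIntegral_congr polarCoord_source_ae_eq_univ.symm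
    _ = ∫⁻ p in polarCoord.symm '' polarCoord.target, g p := by
      rw [polarCoord.symm_image_target_eq_source]
    _ = ∫⁻ p in polarCoord.target, ENNReal.ofReal |(B p).det| * g (polarCoord.symm p) := by
      apply lintegral_image_eq_lintegral_abs_det_fderiv_mul volume
        polarCoord.open_target.measurableSet A
      exact polarCoord.symm.injOn
    _ = ∫⁻ p in polarCoord.target, ENNReal.ofReal p.1 * g (polarCoord.symm p) := by
      apply setLIntegral_congr_fun polarCoord.open_target.measurableSet
      intro x hx
      dsimp only
      rw [B_det, abs_of_pos hx.1]

theorem circ_vol_eq (A : Set (ℝ × ℝ)) (hA : IsClosed A) (r : ℝ) :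
    volume ({θ : ℝ | (r * Real.cos θ, r * Real.sin θ) ∈ A} ∩ Ioo (-π) π) =
      volume {θ : ℝ | θ ∈ Set.Ico 0 (2 * π) ∧ (r * Real.cos θ, r * Real.sin θ) ∈ A} := by
  set S := {θ : ℝ | (r * Real.cos θ, r * Real.sin θ) ∈ A} with hSdef
  have hf : Continuous fun θ : ℝ => (r * Real.cos θ, r * Real.sin θ) := by fun_prop
  have hS : MeasurableSet S := hf.measurable hA.measurableSet
  have h2pi : (0:ℝ) < 2 * π := by positivity
  have hper : ∀ (g : AddSubgroup.zmultiples (2*π)) (x : ℝ),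
      S.indicator (fun _ => (1:ENNReal)) (g +ᵥ x) = S.indicator (fun _ => (1:ENNReal)) x := by
    rintro ⟨g, hg⟩ x
    obtain ⟨k, hk⟩ := (AddSubgroup.mem_zmultiples_iff).1 hg
    have hgx : g + x = x + (k : ℝ) * (2 * π) := by
      rw [← hk]; push_cast [zsmul_eq_mul]; ring
    have hmem : (g + x ∈ S) ↔ (x ∈ S) := by
      simp only [hSdef, Set.mem_setOf_eq, hgx, Real.cos_add_int_mul_two_pi,
        Real.sin_add_int_mul_two_pi]
    by_cases hx : x ∈ S
    · rw [Set.indicator_of_mem hx, Set.indicator_of_mem (by simpa [hmem] using hx)]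
    · rw [Set.indicator_of_notMem hx, Set.indicator_of_notMem (by simpa [hmem] using hx)]
  have key := (isAddFundamentalDomain_Ioc h2pi (-π)).setLIntegral_eq
    (isAddFundamentalDomain_Ioc h2pi 0) (S.indicator fun _ => (1:ENNReal)) hper
  have e1 : (-π) + 2 * π = π := by ring
  have e2 : (0:ℝ) + 2 * π = 2 * π := by ring
  rw [e1, e2] at key
  have v1 : ∀ t : Set ℝ, ∫⁻ θ in t, S.indicator (fun _ => (1:ENNReal)) θ = volume (S ∩ t) := by
    intro t
    rw [lintegral_indicator hS, setLIntegral_one, Measure.restrict_apply hS]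
  rw [v1, v1] at key
  have hIoo : (S ∩ Ioo (-π) π : Set ℝ) =ᵐ[volume] (S ∩ Ioc (-π) π : Set ℝ) :=
    (Filter.EventuallyEq.refl _ _).inter Ioo_ae_eq_Ioc
  have hIco : (S ∩ Ioc 0 (2*π) : Set ℝ) =ᵐ[volume] (S ∩ Ico 0 (2*π) : Set ℝ) :=
    (Filter.EventuallyEq.refl _ _).inter (Ioc_ae_eq_Icc.trans Ico_ae_eq_Icc.symm)
  have hset : {θ : ℝ | θ ∈ Set.Ico 0 (2 * π) ∧ (r * Real.cos θ, r * Real.sin θ) ∈ A}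
      = S ∩ Ico 0 (2*π) := by
    ext θ; simp [hSdef, Set.mem_setOf_eq, and_comm]
  rw [measure_congr hIoo, key, measure_congr hIco, hset]

theorem gauss2_eq_withDensity : gauss2 =
    (volume : Measure (ℝ × ℝ)).withDensity fun p => gaussianPDF 0 1 p.1 * gaussianPDF 0 1 p.2 := by
  refine Measure.prod_eq fun s t hs ht => ?_
  rw [withDensity_apply _ (hs.prod ht), Measure.volume_eq_prod, ← Measure.prod_restrict,
    lintegral_prod_mul (measurable_gaussianPDF 0 1).aemeasurable
      (measurable_gaussianPDF 0 1).aemeasurable,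
    gaussianReal_of_var_ne_zero _ one_ne_zero, withDensity_apply _ hs, withDensity_apply _ ht]

theorem gauss2_polar (A : Set (ℝ × ℝ)) (hA : IsClosed A) :
    gauss2 A = ∫⁻ r in Ioi (0:ℝ),
      ENNReal.ofReal (r * ((2*π)⁻¹ * Real.exp (-r^2/2))) *
        volume {θ : ℝ | θ ∈ Set.Ico 0 (2*π) ∧ (r * Real.cos θ, r * Real.sin θ) ∈ A} := by
  have hAm := hA.measurableSet
  set D : ℝ × ℝ → ENNReal := fun p => gaussianPDF 0 1 p.1 * gaussianPDF 0 1 p.2 with hD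
  have hDm : Measurable D :=
    ((measurable_gaussianPDF 0 1).comp measurable_fst).mul
      ((measurable_gaussianPDF 0 1).comp measurable_snd)
  have hsymm : ∀ p : ℝ × ℝ, polarCoord.symm p = (p.1 * Real.cos p.2, p.1 * Real.sin p.2) :=
    fun _ => rfl
  have htarget : polarCoord.target = Ioi (0:ℝ) ×ˢ Ioo (-π) π := rfl
  rw [gauss2_eq_withDensity, withDensity_apply _ hAm, ← lintegral_indicator hAm,
    lintegral_comp_polarCoord_symm' (A.indicator D), htarget, Measure.volume_eq_prod,
    ← Measure.prod_restrict]
  have hmeas : Measurable fun p : ℝ × ℝ =>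
      ENNReal.ofReal p.1 * A.indicator D (polarCoord.symm p) := by
    apply (ENNReal.measurable_ofReal.comp measurable_fst).mul
    exact (hDm.indicator hAm).comp
      (Continuous.measurable (by fun_prop :
        Continuous fun p : ℝ × ℝ => (p.1 * Real.cos p.2, p.1 * Real.sin p.2)))
  rw [lintegral_prod _ hmeas.aemeasurable]
  refine setLIntegral_congr_fun measurableSet_Ioi ?_
  intro r hr
  have hrpos : (0:ℝ) < r := hr
  -- compute the inner integrand
  have hval : ∀ θ : ℝ, A.indicator D (polarCoord.symm (r, θ)) =
      ENNReal.ofReal ((2*π)⁻¹ * Real.exp (-r^2/2)) *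
        Set.indicator {θ : ℝ | (r * Real.cos θ, r * Real.sin θ) ∈ A} (fun _ => 1) θ := by
    intro θ
    rw [hsymm]
    by_cases hmem : (r * Real.cos θ, r * Real.sin θ) ∈ A
    · rw [Set.indicator_of_mem hmem, Set.indicator_of_mem
        (show θ ∈ {θ : ℝ | (r * Real.cos θ, r * Real.sin θ) ∈ A} from hmem), mul_one]
      show gaussianPDF 0 1 (r * Real.cos θ) * gaussianPDF 0 1 (r * Real.sin θ) = _
      rw [gaussianPDF, gaussianPDF, ← ENNReal.ofReal_mul (gaussianPDFReal_nonneg _ _ _)]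
      congr 1
      rw [gaussianPDFReal, gaussianPDFReal]
      have h1 : ((1 : NNReal) : ℝ) = 1 := rfl
      rw [h1, mul_one]
      have hsq : √(2 * π) * √(2 * π) = 2 * π := Real.mul_self_sqrt (by positivity)
      rw [show (√(2*π))⁻¹ * rexp (-(r * Real.cos θ - 0)^2 / (2*1)) *
          ((√(2*π))⁻¹ * rexp (-(r * Real.sin θ - 0)^2 / (2*1))) =
          (√(2*π) * √(2*π))⁻¹ * (rexp (-(r * Real.cos θ - 0)^2 / (2*1)) *
            rexp (-(r * Real.sin θ - 0)^2 / (2*1))) by ring, hsq, ← Real.exp_add]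
      have hexp : -(r * Real.cos θ - 0)^2 / (2*1) + -(r * Real.sin θ - 0)^2 / (2*1)
          = -r^2/2 := by
        linear_combination (-(r^2)/2) * Real.cos_sq_add_sin_sq θ
      rw [hexp]
    · rw [Set.indicator_of_notMem hmem, Set.indicator_of_notMem
        (show θ ∉ {θ : ℝ | (r * Real.cos θ, r * Real.sin θ) ∈ A} from hmem), mul_zero]
  calc
    ∫⁻ θ in Ioo (-π) π, ENNReal.ofReal r * A.indicator D (polarCoord.symm (r, θ))
        = ∫⁻ θ in Ioo (-π) π,
          (ENNReal.ofReal r * ENNReal.ofReal ((2*π)⁻¹ * Real.exp (-r^2/2))) *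
            Set.indicator {θ : ℝ | (r * Real.cos θ, r * Real.sin θ) ∈ A} (fun _ => 1) θ := by
      refine lintegral_congr fun θ => ?_
      rw [hval θ, mul_assoc]
    _ = (ENNReal.ofReal r * ENNReal.ofReal ((2*π)⁻¹ * Real.exp (-r^2/2))) *
          volume ({θ : ℝ | (r * Real.cos θ, r * Real.sin θ) ∈ A} ∩ Ioo (-π) π) := by
      rw [lintegral_const_mul' _ _ (by finiteness)]
      congr 1
      have hf : Continuous fun θ : ℝ => (r * Real.cos θ, r * Real.sin θ) := by fun_prop
      have hS : MeasurableSet {θ : ℝ | (r * Real.cos θ, r * Real.sin θ) ∈ A} :=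
        hf.measurable hAm
      rw [lintegral_indicator hS, setLIntegral_one, Measure.restrict_apply hS]
    _ = ENNReal.ofReal (r * ((2*π)⁻¹ * Real.exp (-r^2/2))) *
          volume {θ : ℝ | θ ∈ Set.Ico 0 (2*π) ∧ (r * Real.cos θ, r * Real.sin θ) ∈ A} := by
      rw [← ENNReal.ofReal_mul hrpos.le, circ_vol_eq A hA r]

theorem lintegral_r_exp (a : ℝ) (ha : 0 ≤ a) :
    ∫⁻ r in Ioi a, ENNReal.ofReal (r * Real.exp (-r^2/2)) =
      ENNReal.ofReal (Real.exp (-a^2/2)) := by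
  set g : ℝ → ℝ := fun x => -Real.exp (-x^2/2) with hg
  set g' : ℝ → ℝ := fun x => x * Real.exp (-x^2/2) with hg'
  have hderiv : ∀ x ∈ Ioi a, HasDerivAt g (g' x) x := by
    intro x _
    have h1 : HasDerivAt (fun y : ℝ => -y^2/2) (-x) x := by
      have h := ((hasDerivAt_pow 2 x).div_const 2).fun_neg
      have e1 : (fun y : ℝ => -(y^2/2)) = fun y : ℝ => -y^2/2 := by funext y; ring
      rw [e1] at h
      exact h.congr_deriv (by norm_num)
    have h2 := (h1.exp).fun_neg
    refine h2.congr_deriv ?_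
    simp only [hg']
    ring
  have hcont : ContinuousWithinAt g (Ici a) a := by
    apply Continuous.continuousWithinAt; fun_prop
  have g'nonneg : ∀ x ∈ Ioi a, 0 ≤ g' x := fun x hx =>
    mul_nonneg (ha.trans (le_of_lt hx)) (Real.exp_nonneg _)
  have htend : Filter.Tendsto g Filter.atTop (nhds 0) := by
    have h2 : Filter.Tendsto (fun x : ℝ => x^2/2) Filter.atTop Filter.atTop :=
      (Filter.tendsto_pow_atTop two_ne_zero).atTop_div_const (by norm_num)
    have h3 : Filter.Tendsto (fun x : ℝ => -(x^2/2)) Filter.atTop Filter.atBot :=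
      Filter.tendsto_neg_atTop_atBot.comp h2
    have h4 : Filter.Tendsto (fun x : ℝ => Real.exp (-(x^2/2))) Filter.atTop (nhds 0) :=
      Real.tendsto_exp_atBot.comp h3
    have := h4.neg
    rw [neg_zero] at this
    simpa [hg, neg_div] using this
  have hint : IntegrableOn g' (Ioi a) :=
    integrableOn_Ioi_deriv_of_nonneg hcont hderiv g'nonneg htend
  have hval : ∫ x in Ioi a, g' x = Real.exp (-a^2/2) := by
    rw [integral_Ioi_of_hasDerivAt_of_nonneg hcont hderiv g'nonneg htend]
    simp [hg]
  rw [← ofReal_integral_eq_lintegral_ofReal hint ?_, hval]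
  rw [Filter.EventuallyLE, ae_restrict_iff' measurableSet_Ioi]
  filter_upwards with x hx
  exact mul_nonneg (ha.trans hx.le) (Real.exp_nonneg _)

/-- If `A ⊆ ℝ²` is closed and `r ↦ μ_A(r)` is non-decreasing, then
`sup_{r>0} (μ_A(r) e^{-r²/2}) ≤ 𝒢(A) ≤ e^{-Δ_A²/2}`. -/
theorem gaussian_measure_of_radially_monotone (A : Set (ℝ × ℝ)) (hA : IsClosed A)
    (hmono : MonotoneOn (circFrac A) (Set.Ioi (0 : ℝ))) :
    (∀ r : ℝ, 0 < r → circFrac A r * Real.exp (-r ^ 2 / 2) ≤ (gauss2 A).toReal) ∧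
      (gauss2 A).toReal ≤ Real.exp (-(essDist A) ^ 2 / 2) := by
  haveI : IsProbabilityMeasure gauss2 :=
    inferInstanceAs (IsProbabilityMeasure ((gaussianReal 0 1).prod (gaussianReal 0 1)))
  set M : ℝ → ENNReal := fun r =>
    volume {θ : ℝ | θ ∈ Set.Ico 0 (2 * π) ∧ (r * Real.cos θ, r * Real.sin θ) ∈ A} with hM
  have hπ : (0:ℝ) < 2 * π := by positivity
  have hMle : ∀ r, M r ≤ ENNReal.ofReal (2 * π) := by
    intro r
    have : {θ : ℝ | θ ∈ Set.Ico 0 (2 * π) ∧ (r * Real.cos θ, r * Real.sin θ) ∈ A}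
        ⊆ Set.Ico 0 (2 * π) := fun θ h => h.1
    calc M r ≤ volume (Set.Ico 0 (2*π)) := measure_mono this
    _ = ENNReal.ofReal (2*π) := by rw [Real.volume_Ico, sub_zero]
  have hMne : ∀ r, M r ≠ ⊤ := fun r => ((hMle r).trans_lt ENNReal.ofReal_lt_top).ne
  have hcf : ∀ r, circFrac A r = (M r).toReal / (2 * π) := fun r => rfl
  have hpolar := gauss2_polar A hA
  constructor
  · -- lower bound
    intro r₀ hr₀
    have hMmono : ∀ r, r₀ ≤ r → M r₀ ≤ M r := by
      intro r hrr
      have h1 := hmono (Set.mem_Ioi.2 hr₀) (Set.mem_Ioi.2 (hr₀.trans_le hrr)) hrr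
      rw [hcf, hcf] at h1
      have h1' := mul_le_mul_of_nonneg_right h1 hπ.le
      rw [div_mul_cancel₀ _ hπ.ne', div_mul_cancel₀ _ hπ.ne'] at h1'
      exact (ENNReal.toReal_le_toReal (hMne r₀) (hMne r)).1 h1'
    have key : ENNReal.ofReal ((2*π)⁻¹) * M r₀ * ENNReal.ofReal (Real.exp (-r₀^2/2))
        ≤ gauss2 A := by
      rw [hpolar]
      calc ENNReal.ofReal ((2*π)⁻¹) * M r₀ * ENNReal.ofReal (Real.exp (-r₀^2/2))
          = ENNReal.ofReal ((2*π)⁻¹) * M r₀ *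
            ∫⁻ r in Ioi r₀, ENNReal.ofReal (r * Real.exp (-r^2/2)) := by
            rw [lintegral_r_exp r₀ hr₀.le]
        _ = ∫⁻ r in Ioi r₀, ENNReal.ofReal ((2*π)⁻¹) * M r₀ *
              ENNReal.ofReal (r * Real.exp (-r^2/2)) := by
            rw [lintegral_const_mul' _ _ (ENNReal.mul_ne_top ENNReal.ofReal_ne_top (hMne r₀))]
        _ ≤ ∫⁻ r in Ioi r₀,
              ENNReal.ofReal (r * ((2*π)⁻¹ * Real.exp (-r^2/2))) * M r := by
            refine lintegral_mono_ae ?_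
            rw [ae_restrict_iff' measurableSet_Ioi]
            filter_upwards with r hr
            have hrpos : (0:ℝ) < r := hr₀.trans hr
            have e : ENNReal.ofReal (r * ((2*π)⁻¹ * Real.exp (-r^2/2)))
                = ENNReal.ofReal ((2*π)⁻¹) * ENNReal.ofReal (r * Real.exp (-r^2/2)) := by
              rw [← ENNReal.ofReal_mul (by positivity)]
              congr 1; ring
            rw [e]
            calc ENNReal.ofReal ((2*π)⁻¹) * M r₀ * ENNReal.ofReal (r * Real.exp (-r^2/2))
                = ENNReal.ofReal ((2*π)⁻¹) * ENNReal.ofReal (r * Real.exp (-r^2/2)) * M r₀ := by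
                  ring
              _ ≤ ENNReal.ofReal ((2*π)⁻¹) * ENNReal.ofReal (r * Real.exp (-r^2/2)) * M r :=
                  mul_le_mul_right (hMmono r hr.le) _
        _ ≤ ∫⁻ r in Ioi 0, ENNReal.ofReal (r * ((2*π)⁻¹ * Real.exp (-r^2/2))) * M r :=
            lintegral_mono_set (Ioi_subset_Ioi hr₀.le)
    have h2 := ENNReal.toReal_mono (measure_ne_top gauss2 A) key
    have heq : (ENNReal.ofReal ((2*π)⁻¹) * M r₀ * ENNReal.ofReal (Real.exp (-r₀^2/2))).toReal
        = circFrac A r₀ * Real.exp (-r₀ ^ 2 / 2) := by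
      rw [ENNReal.toReal_mul, ENNReal.toReal_mul, ENNReal.toReal_ofReal (by positivity),
        ENNReal.toReal_ofReal (Real.exp_nonneg _), hcf]
      ring_nf
    rw [heq] at h2
    exact h2
  · -- upper bound
    set Δ := essDist A with hΔ
    have hΔ0 : 0 ≤ Δ := Real.sInf_nonneg (fun x hx => hx.1.le)
    have hzero : ∀ r, 0 < r → r < Δ → M r = 0 := by
      intro r hrpos hrΔ
      have hnot : r ∉ {r : ℝ | 0 < r ∧ 0 < circFrac A r} := by
        intro hmem
        exact absurd (csInf_le ⟨0, fun x hx => hx.1.le⟩ hmem) (not_le.2 hrΔ)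
      have hc0 : circFrac A r = 0 := by
        by_contra h
        have : 0 < circFrac A r :=
          lt_of_le_of_ne (div_nonneg ENNReal.toReal_nonneg hπ.le) (Ne.symm h)
        exact hnot ⟨hrpos, this⟩
      rw [hcf] at hc0
      have : (M r).toReal = 0 := by
        field_simp at hc0
        simpa using hc0
      exact (ENNReal.toReal_eq_zero_iff _).1 this |>.resolve_right (hMne r)
    have key : gauss2 A ≤ ENNReal.ofReal (Real.exp (-Δ^2/2)) := by
      rw [hpolar]
      calc ∫⁻ r in Ioi 0, ENNReal.ofReal (r * ((2*π)⁻¹ * Real.exp (-r^2/2))) * M r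
          ≤ ∫⁻ r in Ioi (0:ℝ),
            (Ici Δ).indicator (fun r => ENNReal.ofReal (r * Real.exp (-r^2/2))) r := by
            refine lintegral_mono_ae ?_
            rw [ae_restrict_iff' measurableSet_Ioi]
            filter_upwards with r hr
            have hrpos : (0:ℝ) < r := hr
            rcases le_or_gt Δ r with hcase | hcase
            · rw [Set.indicator_of_mem (mem_Ici.2 hcase)]
              calc ENNReal.ofReal (r * ((2*π)⁻¹ * Real.exp (-r^2/2))) * M r
                  ≤ ENNReal.ofReal (r * ((2*π)⁻¹ * Real.exp (-r^2/2))) *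
                    ENNReal.ofReal (2*π) := mul_le_mul_right (hMle r) _
                _ = ENNReal.ofReal (r * Real.exp (-r^2/2)) := by
                  rw [← ENNReal.ofReal_mul (mul_nonneg hrpos.le (by positivity))]
                  congr 1
                  field_simp
            · rw [hzero r hr hcase, mul_zero]
              exact zero_le
        _ ≤ ∫⁻ r, (Ici Δ).indicator (fun r => ENNReal.ofReal (r * Real.exp (-r^2/2))) r :=
            setLIntegral_le_lintegral _ _
        _ = ∫⁻ r in Ici Δ, ENNReal.ofReal (r * Real.exp (-r^2/2)) := by
            rw [lintegral_indicator measurableSet_Ici]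
        _ = ∫⁻ r in Ioi Δ, ENNReal.ofReal (r * Real.exp (-r^2/2)) :=
            (setLIntegral_congr Ioi_ae_eq_Ici).symm
        _ = ENNReal.ofReal (Real.exp (-Δ^2/2)) := lintegral_r_exp Δ hΔ0
    have h2 := ENNReal.toReal_mono ENNReal.ofReal_ne_top key
    rw [ENNReal.toReal_ofReal (Real.exp_nonneg _)] at h2
    exact h2
end
end

section
/- Let 0 < τ < 2, α = 1 − τ²/2, β = √(τ² − τ⁴/4), and Δ(u,v) = min{u, αu + βv}. There is a constant c_τ > 0 (depending only on τ) such that for every t ≥ 0, every 0 < ε < 1/3, and X₁, Y₁ independent standard Gaussians: c_τ · ε · e^{−(1+ε)·(4/(4−τ²))·t²} ≤ Pr[Δ(X₁, Y₁) ≥ t] ≤ e^{−(4/(4−τ²))·t²/2}. -/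
open MeasureTheory ProbabilityTheory Real
open scoped NNReal ENNReal

noncomputable section

lemma gaussianReal_std_eq : gaussianReal 0 1 =
    volume.withDensity (fun x => ((gaussianPDFReal 0 1 x).toNNReal : ENNReal)) := by
  rw [gaussianReal_of_var_ne_zero _ one_ne_zero]
  rfl

lemma integral_gaussianReal_std (g : ℝ → ℝ) :
    ∫ x, g x ∂(gaussianReal 0 1) = ∫ x, gaussianPDFReal 0 1 x * g x := by
  rw [gaussianReal_std_eq,
    integral_withDensity_eq_integral_smul (measurable_gaussianPDFReal 0 1).real_toNNReal]
  congr 1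
  ext x
  rw [NNReal.smul_def, Real.coe_toNNReal _ (gaussianPDFReal_nonneg 0 1 x), smul_eq_mul]

lemma exp_mul_gaussianPDFReal (c x : ℝ) :
    gaussianPDFReal 0 1 x * Real.exp (c * x)
      = Real.exp (c ^ 2 / 2) * gaussianPDFReal c 1 x := by
  simp only [gaussianPDFReal_def, NNReal.coe_one]
  rw [mul_assoc, ← Real.exp_add, mul_left_comm, ← Real.exp_add]
  congr 2
  ring

lemma integrable_exp_gaussianReal (c : ℝ) :
    Integrable (fun x => Real.exp (c * x)) (gaussianReal 0 1) := by
  rw [gaussianReal_std_eq,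
    integrable_withDensity_iff_integrable_smul (measurable_gaussianPDFReal 0 1).real_toNNReal]
  have : (fun x => ((gaussianPDFReal 0 1 x).toNNReal : ℝ≥0) • Real.exp (c * x))
      = fun x => Real.exp (c ^ 2 / 2) * gaussianPDFReal c 1 x := by
    ext x
    rw [NNReal.smul_def, Real.coe_toNNReal _ (gaussianPDFReal_nonneg 0 1 x), smul_eq_mul,
      exp_mul_gaussianPDFReal]
  rw [this]
  exact (integrable_gaussianPDFReal c 1).const_mul _

lemma integral_exp_gaussianReal (c : ℝ) :
    ∫ x, Real.exp (c * x) ∂(gaussianReal 0 1) = Real.exp (c ^ 2 / 2) := by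
  rw [integral_gaussianReal_std]
  simp_rw [exp_mul_gaussianPDFReal]
  rw [integral_const_mul, integral_gaussianPDFReal_eq_one c one_ne_zero, mul_one]

lemma gauss_interval_lb (a : ℝ) (ha : 0 ≤ a) :
    gaussianPDFReal 0 1 (a + 1) ≤ ((gaussianReal 0 1) (Set.Icc a (a + 1))).toReal := by
  rw [gaussianReal_apply_eq_integral 0 one_ne_zero, ENNReal.toReal_ofReal
    (integral_nonneg fun x => gaussianPDFReal_nonneg 0 1 x)]
  have h1 : ∫ x in Set.Icc a (a + 1), gaussianPDFReal 0 1 (a + 1)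
      = gaussianPDFReal 0 1 (a + 1) := by
    rw [setIntegral_const, Real.volume_real_Icc]
    simp
  calc gaussianPDFReal 0 1 (a + 1)
      = ∫ x in Set.Icc a (a + 1), gaussianPDFReal 0 1 (a + 1) := h1.symm
    _ ≤ ∫ x in Set.Icc a (a + 1), gaussianPDFReal 0 1 x := by
        refine setIntegral_mono_on (integrableOn_const ?_)
          ((integrable_gaussianPDFReal 0 1).integrableOn) measurableSet_Icc ?_
        · rw [Real.volume_Icc]; exact ENNReal.ofReal_ne_top
        · intro x hx
          simp only [gaussianPDFReal_def, NNReal.coe_one, mul_one, sub_zero]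
          refine mul_le_mul_of_nonneg_left (Real.exp_le_exp.2 ?_) (by positivity)
          have hx1 := hx.1
          have hx2 := hx.2
          nlinarith


set_option maxHeartbeats 1000000 in
/-- For `0 < τ < 2`, `α = 1 - τ²/2`, `β = √(τ² - τ⁴/4)` and `Δ(u,v) = min(u, αu + βv)`,
there is `c_τ > 0` such that for every `t ≥ 0` and `0 < ε < 1/3`:
`c_τ · ε · e^{-(1+ε)(4/(4-τ²))t²} ≤ Pr[Δ(X₁,Y₁) ≥ t] ≤ e^{-(4/(4-τ²))t²/2}`
for independent standard Gaussians `X₁, Y₁`. -/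
theorem delta_tail_bounds (τ α β : ℝ) (hτ0 : 0 < τ) (hτ2 : τ < 2)
    (hα : α = 1 - τ ^ 2 / 2) (hβ : β = Real.sqrt (τ ^ 2 - τ ^ 4 / 4)) :
    ∃ c : ℝ, 0 < c ∧
      ∀ t : ℝ, 0 ≤ t → ∀ ε : ℝ, 0 < ε → ε < 1 / 3 →
        c * ε * Real.exp (-((1 + ε) * (4 / (4 - τ ^ 2)) * t ^ 2))
            ≤ (gauss2 {z : ℝ × ℝ | t ≤ min z.1 (α * z.1 + β * z.2)}).toReal ∧
          (gauss2 {z : ℝ × ℝ | t ≤ min z.1 (α * z.1 + β * z.2)}).toReal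
            ≤ Real.exp (-(4 / (4 - τ ^ 2)) * t ^ 2 / 2) := by
  haveI : IsProbabilityMeasure gauss2 := by
    unfold gauss2; infer_instance
  have hK2 : (0 : ℝ) < 4 - τ ^ 2 := by nlinarith
  have hβ2 : β ^ 2 = τ ^ 2 - τ ^ 4 / 4 := by
    rw [hβ]; exact Real.sq_sqrt (by nlinarith [mul_pos (pow_pos hτ0 2) hK2])
  have hτ4 : (0 : ℝ) < τ ^ 2 - τ ^ 4 / 4 := by nlinarith [mul_pos (pow_pos hτ0 2) hK2]
  have hβpos : 0 < β := by
    rw [hβ]; exact Real.sqrt_pos.2 hτ4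
  have hα1 : α < 1 := by rw [hα]; nlinarith
  -- opaque constants for the lower bound
  obtain ⟨M, hM⟩ : ∃ M : ℝ, M = (1 - α) / β := ⟨_, rfl⟩
  obtain ⟨C, hC⟩ : ∃ C : ℝ, C = (1 + |α|) / β := ⟨_, rfl⟩
  obtain ⟨K, hK⟩ : ∃ K : ℝ, K = 4 / (4 - τ ^ 2) := ⟨_, rfl⟩
  have hMnn : 0 ≤ M := hM ▸ div_nonneg (by linarith) hβpos.le
  have hCpos : 0 < C := hC ▸ div_pos (by positivity) hβpos
  have hKpos : 0 < K := by rw [hK]; positivity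
  have hKM : K = 1 + M ^ 2 := by
    have h1 : M * β = 1 - α := by rw [hM]; exact div_mul_cancel₀ _ hβpos.ne'
    have h3 : M ^ 2 * β ^ 2 = (1 - α) ^ 2 := by
      linear_combination (M * β + (1 - α)) * h1
    rw [hβ2, hα] at h3
    have h4 : M ^ 2 * (4 - τ ^ 2) * τ ^ 2 = τ ^ 2 * τ ^ 2 := by linear_combination 4 * h3
    have h5 : M ^ 2 * (4 - τ ^ 2) = τ ^ 2 := mul_right_cancel₀ (pow_ne_zero 2 hτ0.ne') h4
    rw [hK, div_eq_iff hK2.ne']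
    linear_combination -h5
  obtain ⟨A, hA⟩ : ∃ A : ℝ, A = 1 + M * (C + 1) := ⟨_, rfl⟩
  have hApos : 0 < A := by rw [hA]; positivity
  obtain ⟨B0, hB0⟩ : ∃ B0 : ℝ, B0 = (1 + (C + 1) ^ 2) / 2 := ⟨_, rfl⟩
  have hB0pos : 0 < B0 := by rw [hB0]; positivity
  refine ⟨(2 * π)⁻¹ * Real.exp (-(A ^ 2 / (2 * K)) - B0), by positivity, ?_⟩
  intro t ht ε hε0 hε3
  constructor
  · -- lower bound
    rw [← hK]
    obtain ⟨a, ha⟩ : ∃ a : ℝ, a = M * t + C := ⟨_, rfl⟩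
    have hann : 0 ≤ a := by rw [ha]; positivity
    have hsub : Set.Icc t (t + 1) ×ˢ Set.Icc a (a + 1)
        ⊆ {z : ℝ × ℝ | t ≤ min z.1 (α * z.1 + β * z.2)} := by
      rintro ⟨x, y⟩ ⟨⟨hx1, hx2⟩, ⟨hy1, hy2⟩⟩
      simp only [Set.mem_setOf_eq, le_min_iff]
      refine ⟨hx1, ?_⟩
      have habs : -|α| ≤ α * (x - t) := by
        have h1 : |α * (x - t)| ≤ |α| := by
          rw [abs_mul]
          refine mul_le_of_le_one_right (abs_nonneg α) ?_
          rw [abs_of_nonneg (by linarith)]; linarith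
        linarith [neg_abs_le (α * (x - t)), abs_le.1 h1]
      have hby : β * a ≤ β * y := mul_le_mul_of_nonneg_left hy1 hβpos.le
      have hba : β * a = (1 - α) * t + (1 + |α|) := by
        rw [ha, hM, hC]; field_simp
      linarith [habs, hby, hba]
    have hmono : (gauss2 (Set.Icc t (t + 1) ×ˢ Set.Icc a (a + 1))).toReal
        ≤ (gauss2 {z : ℝ × ℝ | t ≤ min z.1 (α * z.1 + β * z.2)}).toReal :=
      ENNReal.toReal_mono (measure_ne_top _ _) (measure_mono hsub)
    have hbox : (gauss2 (Set.Icc t (t + 1) ×ˢ Set.Icc a (a + 1))).toReal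
        = ((gaussianReal 0 1) (Set.Icc t (t + 1))).toReal
          * ((gaussianReal 0 1) (Set.Icc a (a + 1))).toReal := by
      unfold gauss2
      rw [Measure.prod_prod, ENNReal.toReal_mul]
    have hprod : gaussianPDFReal 0 1 (t + 1) * gaussianPDFReal 0 1 (a + 1)
        ≤ (gauss2 (Set.Icc t (t + 1) ×ˢ Set.Icc a (a + 1))).toReal := by
      rw [hbox]
      exact mul_le_mul (gauss_interval_lb t ht) (gauss_interval_lb a hann)
        (gaussianPDFReal_nonneg 0 1 _) ENNReal.toReal_nonneg
    refine le_trans ?_ (le_trans hprod hmono)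
    have hpdf : gaussianPDFReal 0 1 (t + 1) * gaussianPDFReal 0 1 (a + 1)
        = (2 * π)⁻¹ * Real.exp (-((t + 1) ^ 2 + (a + 1) ^ 2) / 2) := by
      simp only [gaussianPDFReal_def, NNReal.coe_one, mul_one, sub_zero]
      rw [show ((√(2 * π))⁻¹ * rexp (-(t+1) ^ 2 / 2)) * ((√(2 * π))⁻¹ * rexp (-(a+1) ^ 2 / 2))
          = ((√(2 * π)) * (√(2 * π)))⁻¹ * (rexp (-(t+1) ^ 2 / 2) * rexp (-(a+1) ^ 2 / 2)) by ring,
        Real.mul_self_sqrt (by positivity), ← Real.exp_add]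
      congr 2
      ring
    rw [hpdf]
    have hεK : Real.exp (-((1 + ε) * K * t ^ 2)) ≤ Real.exp (-(K * t ^ 2)) := by
      apply Real.exp_le_exp.2
      nlinarith [mul_nonneg (mul_nonneg hε0.le hKpos.le) (sq_nonneg t)]
    have hcpos : (0 : ℝ) < (2 * π)⁻¹ * Real.exp (-(A ^ 2 / (2 * K)) - B0) := by positivity
    have hcε : (2 * π)⁻¹ * Real.exp (-(A ^ 2 / (2 * K)) - B0) * ε
        ≤ (2 * π)⁻¹ * Real.exp (-(A ^ 2 / (2 * K)) - B0) :=
      mul_le_of_le_one_right hcpos.le (by linarith)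
    calc (2 * π)⁻¹ * Real.exp (-(A ^ 2 / (2 * K)) - B0) * ε * Real.exp (-((1 + ε) * K * t ^ 2))
        ≤ (2 * π)⁻¹ * Real.exp (-(A ^ 2 / (2 * K)) - B0) * Real.exp (-(K * t ^ 2)) :=
          mul_le_mul hcε hεK (Real.exp_pos _).le hcpos.le
      _ = (2 * π)⁻¹ * Real.exp (-(A ^ 2 / (2 * K)) - B0 + -(K * t ^ 2)) := by
          rw [mul_assoc, ← Real.exp_add]
      _ ≤ (2 * π)⁻¹ * Real.exp (-((t + 1) ^ 2 + (a + 1) ^ 2) / 2) := by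
          refine mul_le_mul_of_nonneg_left (Real.exp_le_exp.2 ?_) (by positivity)
          have hQ : (t + 1) ^ 2 + (a + 1) ^ 2 = K * t ^ 2 + 2 * A * t + 2 * B0 := by
            rw [ha, hA, hB0, hKM]; ring
          rw [hQ]
          have hAM : 2 * A * t ≤ K * t ^ 2 + A ^ 2 / K := by
            nlinarith [sq_nonneg (K * t - A), div_mul_cancel₀ (A ^ 2) hKpos.ne', hKpos]
          have h2K : A ^ 2 / (2 * K) = A ^ 2 / K / 2 := by ring
          linarith [hAM, h2K]
  · -- upper bound
    obtain ⟨lam, hlam⟩ : ∃ lam : ℝ, lam = 2 * t / (4 - τ ^ 2) := ⟨_, rfl⟩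
    have hlamnn : 0 ≤ lam := by rw [hlam]; positivity
    have hsub : {z : ℝ × ℝ | t ≤ min z.1 (α * z.1 + β * z.2)}
        ⊆ {z : ℝ × ℝ | 2 * t ≤ (1 + α) * z.1 + β * z.2} := by
      rintro ⟨x, y⟩ hz
      simp only [Set.mem_setOf_eq, le_min_iff] at hz ⊢
      linarith [hz.1, hz.2]
    have heq : (fun z : ℝ × ℝ => Real.exp (lam * ((1 + α) * z.1 + β * z.2)))
        = fun z : ℝ × ℝ => Real.exp ((lam * (1 + α)) * z.1)
          * Real.exp ((lam * β) * z.2) := by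
      ext z
      rw [← Real.exp_add]
      ring_nf
    have hint : Integrable (fun z : ℝ × ℝ =>
        Real.exp (lam * ((1 + α) * z.1 + β * z.2))) gauss2 := by
      rw [heq]
      unfold gauss2
      exact (integrable_exp_gaussianReal _).mul_prod (integrable_exp_gaussianReal _)
    have hmgf : mgf (fun z : ℝ × ℝ => (1 + α) * z.1 + β * z.2) gauss2 lam
        = Real.exp ((lam * (1 + α)) ^ 2 / 2) * Real.exp ((lam * β) ^ 2 / 2) := by
      show ∫ z, Real.exp (lam * ((1 + α) * z.1 + β * z.2)) ∂gauss2 = _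
      rw [heq]
      unfold gauss2
      have hpm := MeasureTheory.integral_prod_mul (μ := gaussianReal 0 1)
        (ν := gaussianReal 0 1) (f := fun x : ℝ => Real.exp ((lam * (1 + α)) * x))
        (g := fun y : ℝ => Real.exp ((lam * β) * y))
      rw [hpm, integral_exp_gaussianReal, integral_exp_gaussianReal]
    have hch := measure_ge_le_exp_mul_mgf (X := fun z : ℝ × ℝ => (1 + α) * z.1 + β * z.2)
      (μ := gauss2) (2 * t) hlamnn hint
    have hle : (gauss2 {z : ℝ × ℝ | t ≤ min z.1 (α * z.1 + β * z.2)}).toReal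
        ≤ (gauss2 {z : ℝ × ℝ | 2 * t ≤ (1 + α) * z.1 + β * z.2}).toReal :=
      ENNReal.toReal_mono (measure_ne_top _ _) (measure_mono hsub)
    refine le_trans hle (le_trans hch ?_)
    rw [hmgf, ← Real.exp_add, ← Real.exp_add]
    apply le_of_eq
    congr 1
    rw [mul_pow lam β, hβ2, hα, hlam]
    field_simp
    ring
end
end

section
/- Let 0 < τ < √2, α = 1 − τ²/2, β = √(τ² − τ⁴/4), and t ≥ 0. Then the squared Euclidean distance from the origin to the set {(x, y) ∈ ℝ² : x ≥ t and αx + βy ≥ t} equals (4/(4 − τ²))·t². -/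
open Real

noncomputable section

/-- For `0 < τ < √2`, `α = 1 - τ²/2`, `β = √(τ² - τ⁴/4)`, and `t ≥ 0`, the squared Euclidean
distance from the origin to `{(x,y) : x ≥ t ∧ αx + βy ≥ t}` equals `(4/(4-τ²))·t²`. -/
theorem sq_dist_to_wedge (τ α β t : ℝ) (hτ0 : 0 < τ) (hτ2 : τ < Real.sqrt 2)
    (hα : α = 1 - τ ^ 2 / 2) (hβ : β = Real.sqrt (τ ^ 2 - τ ^ 4 / 4)) (ht : 0 ≤ t) :
    (Metric.infDist (0 : EuclideanSpace ℝ (Fin 2))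
        {p : EuclideanSpace ℝ (Fin 2) | t ≤ p 0 ∧ t ≤ α * p 0 + β * p 1}) ^ 2
      = 4 / (4 - τ ^ 2) * t ^ 2 := by
  have hτsq : τ ^ 2 < 2 := by
    nlinarith [Real.sq_sqrt (show (0:ℝ) ≤ 2 by norm_num), Real.sqrt_nonneg 2, hτ0, hτ2]
  have h4 : (0:ℝ) < 4 - τ ^ 2 := by nlinarith
  have hβ2 : β ^ 2 = τ ^ 2 - τ ^ 4 / 4 := by
    rw [hβ, Real.sq_sqrt]; nlinarith
  have hβpos : 0 < β := by
    rw [hβ]; exact Real.sqrt_pos.2 (by nlinarith)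
  have hβne : β ≠ 0 := hβpos.ne'
  have hb2' : β ^ 2 = τ ^ 2 * (4 - τ ^ 2) / 4 := by rw [hβ2]; ring
  set c : ℝ := t * (τ ^ 2 / 2) / β with hc
  have hcval : β * c = t * (τ ^ 2 / 2) := by rw [hc]; field_simp
  have hc2 : c ^ 2 = t ^ 2 * τ ^ 2 / (4 - τ ^ 2) := by
    rw [hc, div_pow, hb2']
    field_simp
    ring
  have hsq : t ^ 2 + c ^ 2 = 4 / (4 - τ ^ 2) * t ^ 2 := by
    rw [hc2]; field_simp; ring
  set S : Set (EuclideanSpace ℝ (Fin 2)) :=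
    {p : EuclideanSpace ℝ (Fin 2) | t ≤ p 0 ∧ t ≤ α * p 0 + β * p 1} with hS
  set q : EuclideanSpace ℝ (Fin 2) := (show EuclideanSpace ℝ (Fin 2) from WithLp.toLp 2 ![t, c]) with hq
  have hq0 : q 0 = t := rfl
  have hq1 : q 1 = c := rfl
  have hmem : q ∈ S := by
    constructor
    · rw [hq0]
    · rw [hq0, hq1, hα]
      nlinarith [hcval]
  have hdist : ∀ p : EuclideanSpace ℝ (Fin 2),
      dist (0 : EuclideanSpace ℝ (Fin 2)) p = Real.sqrt ((p 0) ^ 2 + (p 1) ^ 2) := by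
    intro p
    rw [EuclideanSpace.dist_eq]
    simp [Fin.sum_univ_two, Real.dist_eq, abs_sub_comm, sq_abs]
  have hlow : ∀ p ∈ S, dist (0 : EuclideanSpace ℝ (Fin 2)) q ≤ dist 0 p := by
    intro p hp
    obtain ⟨h1, h2⟩ := hp
    rw [hdist, hdist, hq0, hq1]
    apply Real.sqrt_le_sqrt
    rw [hα] at h2
    revert h1 h2
    generalize p 0 = x
    generalize p 1 = y
    intro h1 h2
    have hid : (τ ^ 2 - τ ^ 4 / 4) * (x ^ 2 + y ^ 2) - τ ^ 2 * t ^ 2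
        = (τ ^ 2 - τ ^ 4 / 4) * (x - t) ^ 2 + (β * y - t * (τ ^ 2 / 2)) ^ 2
          + t * τ ^ 2 * (x - t) + t * τ ^ 2 * ((1 - τ ^ 2 / 2) * x + β * y - t) := by
      linear_combination (-(y ^ 2)) * hβ2
    have key : τ ^ 2 * t ^ 2 ≤ (τ ^ 2 - τ ^ 4 / 4) * (x ^ 2 + y ^ 2) := by
      linarith [mul_nonneg (by nlinarith : (0:ℝ) ≤ τ ^ 2 - τ ^ 4 / 4) (sq_nonneg (x - t)),
        sq_nonneg (β * y - t * (τ ^ 2 / 2)),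
        mul_nonneg (mul_nonneg ht (sq_nonneg τ)) (sub_nonneg.2 h1),
        mul_nonneg (mul_nonneg ht (sq_nonneg τ)) (sub_nonneg.2 h2), hid]
    have hb2pos : (0:ℝ) < τ ^ 2 - τ ^ 4 / 4 := by nlinarith
    have heqv : (τ ^ 2 - τ ^ 4 / 4) * (t ^ 2 + c ^ 2) = τ ^ 2 * t ^ 2 := by
      rw [hsq]; field_simp
    have hmul : (τ ^ 2 - τ ^ 4 / 4) * (t ^ 2 + c ^ 2)
        ≤ (τ ^ 2 - τ ^ 4 / 4) * (x ^ 2 + y ^ 2) := by rw [heqv]; exact key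
    exact le_of_mul_le_mul_left hmul hb2pos
  have heq : Metric.infDist (0 : EuclideanSpace ℝ (Fin 2)) S = dist 0 q := by
    apply le_antisymm (Metric.infDist_le_dist_of_mem hmem)
    rw [Metric.infDist_eq_iInf]
    haveI : Nonempty S := ⟨⟨q, hmem⟩⟩
    exact le_ciInf fun y => hlow y y.2
  rw [heq, hdist, hq0, hq1, Real.sq_sqrt (add_nonneg (sq_nonneg t) (sq_nonneg c)), hsq]
end
end
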